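/- If h/k and h'/k' are successive terms of the Farey sequence of order m (all reduced fractions in [0,1] with denominator at most m, listed in increasing order), then h'k − hk' = 1. -/
import Mathlib


theorem stmt_6 (m h k h' k' : ℕ) (hm : 0 < m)
    (hk : 0 < k) (hk' : 0 < k') (hkm : k ≤ m) (hk'm : k' ≤ m)
    (hh : h ≤ k) (hh' : h' ≤ k')
    (hcop : Nat.gcd h k = 1) (hcop' : Nat.gcd h' k' = 1)
    (hlt : (h : ℚ) / k < (h' : ℚ) / k')
    (hadj : ¬ ∃ a b : ℕ, 0 < b ∧ b ≤ m ∧ a ≤ b ∧ Nat.gcd a b = 1 ∧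
      (h : ℚ) / k < (a : ℚ) / b ∧ (a : ℚ) / b < (h' : ℚ) / k') :
    (h' : ℤ) * k - h * k' = 1 := by
  have hkQ : (0:ℚ) < k := by exact_mod_cast hk
  have hk'Q : (0:ℚ) < k' := by exact_mod_cast hk'
  have hkZ : (0:ℤ) < k := by exact_mod_cast hk
  have hk'Z : (0:ℤ) < k' := by exact_mod_cast hk'
  have hkmZ : (k:ℤ) ≤ m := by exact_mod_cast hkm
  have hk'mZ : (k':ℤ) ≤ m := by exact_mod_cast hk'm
  have hD : (1:ℤ) ≤ (h':ℤ) * k - h * k' := by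
    rw [div_lt_div_iff₀ hkQ hk'Q] at hlt
    have : (h:ℤ) * k' < (h':ℤ) * k := by exact_mod_cast hlt
    linarith
  obtain ⟨x, y, hxy⟩ : ∃ x y : ℤ, (k:ℤ) * x - h * y = 1 := by
    refine ⟨Nat.gcdB h k, -Nat.gcdA h k, ?_⟩
    have hb := Nat.gcd_eq_gcd_ab h k
    rw [hcop] at hb
    push_cast at hb ⊢
    linarith
  set q : ℤ := ((m:ℤ) - y) / k with hq
  set x0 : ℤ := x + h * q with hx0
  set y0 : ℤ := y + k * q with hy0
  have hmod : (k:ℤ) * q + ((m:ℤ) - y) % k = (m:ℤ) - y := Int.mul_ediv_add_emod _ _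
  have hr0 : 0 ≤ ((m:ℤ) - y) % k := Int.emod_nonneg _ (by exact_mod_cast hk.ne')
  have hrk : ((m:ℤ) - y) % k < k := Int.emod_lt_of_pos _ hkZ
  have hy0le : y0 ≤ m := by omega
  have hy0gt : (m:ℤ) - k < y0 := by omega
  have hy0pos : 0 < y0 := by omega
  have hxy0 : (k:ℤ) * x0 - h * y0 = 1 := by
    rw [hx0, hy0]; linear_combination hxy
  have hx0pos : 0 < x0 := by
    by_contra hc
    push_neg at hc
    have h1 : (k:ℤ) * x0 ≤ 0 := mul_nonpos_of_nonneg_of_nonpos hkZ.le hc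
    have h2 : (0:ℤ) ≤ (h:ℤ) * y0 := mul_nonneg (by positivity) hy0pos.le
    linarith
  have hcopxy : IsCoprime x0 y0 := ⟨k, -h, by linear_combination hxy0⟩
  have ha : ((x0.toNat : ℤ)) = x0 := Int.toNat_of_nonneg hx0pos.le
  have hb : ((y0.toNat : ℤ)) = y0 := Int.toNat_of_nonneg hy0pos.le
  rcases lt_or_ge (x0 * k') ((h':ℤ) * y0) with hcase | hcase
  · exfalso; apply hadj
    have hx0lty0 : x0 < y0 := by
      have h3 : (h':ℤ) * y0 ≤ (k':ℤ) * y0 := by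
        have : (h':ℤ) ≤ k' := by exact_mod_cast hh'
        exact mul_le_mul_of_nonneg_right this hy0pos.le
      nlinarith
    refine ⟨x0.toNat, y0.toNat, by omega, by omega, by omega, ?_, ?_, ?_⟩
    · have hg : Int.gcd x0 y0 = 1 := Int.isCoprime_iff_gcd_eq_one.mp hcopxy
      have e1 : x0.natAbs = x0.toNat := by omega
      have e2 : y0.natAbs = y0.toNat := by omega
      simpa [Int.gcd, e1, e2] using hg
    · have hbQ : (0:ℚ) < (y0.toNat : ℚ) := by
        have : 0 < y0.toNat := by omega
        exact_mod_cast this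
      rw [div_lt_div_iff₀ hkQ hbQ]
      have h4 : (h:ℤ) * y0.toNat < (x0.toNat : ℤ) * k := by rw [ha, hb]; linarith
      exact_mod_cast h4
    · have hbQ : (0:ℚ) < (y0.toNat : ℚ) := by
        have : 0 < y0.toNat := by omega
        exact_mod_cast this
      rw [div_lt_div_iff₀ hbQ hk'Q]
      have h4 : (x0.toNat : ℤ) * k' < (h':ℤ) * y0.toNat := by rw [ha, hb]; linarith
      exact_mod_cast h4
  · have hkey : (k':ℤ) = k * (x0 * k' - (h':ℤ) * y0) + y0 * ((h':ℤ) * k - h * k') := by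
      linear_combination -(k':ℤ) * hxy0
    rcases lt_or_eq_of_le hcase with hE | hE
    · exfalso
      have hE1 : (1:ℤ) ≤ x0 * k' - (h':ℤ) * y0 := by linarith
      have t1 : (k:ℤ) * 1 ≤ k * (x0 * k' - (h':ℤ) * y0) :=
        mul_le_mul_of_nonneg_left hE1 hkZ.le
      have t2 : (y0:ℤ) * 1 ≤ y0 * ((h':ℤ) * k - h * k') :=
        mul_le_mul_of_nonneg_left hD hy0pos.le
      linarith
    · -- x0 * k' = h' * y0, hence x0/y0 = h'/k' as reduced fractions
      have hcop'Z : IsCoprime (h':ℤ) (k':ℤ) := Nat.isCoprime_iff_coprime.mpr hcop'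
      have d1 : y0 ∣ (k':ℤ) := by
        have : y0 ∣ x0 * k' := ⟨h', by linear_combination -hE⟩
        exact (hcopxy.symm).dvd_of_dvd_mul_left this
      have d2 : (k':ℤ) ∣ y0 := by
        have : (k':ℤ) ∣ (h':ℤ) * y0 := ⟨x0, by linear_combination hE⟩
        exact (hcop'Z.symm).dvd_of_dvd_mul_left this
      have hy0k' : y0 = k' := Int.dvd_antisymm hy0pos.le hk'Z.le d1 d2
      have h5 : (k':ℤ) * 1 = (k':ℤ) * ((h':ℤ) * k - h * k') := by
        linear_combination hkey - (k:ℤ) * hE + ((h':ℤ) * k - (h:ℤ) * k') * hy0k'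
      exact (mul_left_cancel₀ hk'Z.ne' h5).symm
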